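/- For any acyclic connected component of the state transition graph of a planar or toric trinity, the image of the map s ↦ φ_s, from the set of states in the component to integer-valued functions defined on the black triangles, is closed under pointwise minimum and pointwise maximum: for any states s and t in the component, there exist states in the component whose associated functions are min{φ_s, φ_t} and max{φ_s, φ_t}. -/

import Mathlib

/-!  Combinatorial trinities, Tutte matchings (states), and clock moves,
following Hine and Kálmán, "Clock theorems for triangulated surfaces".

A trinity is encoded combinatorially: `Vertex` is the set of vertices, properly
colored by `vcol` with colors `Fin 3` (0 = red, 1 = green, 2 = blue); `White`
and `Black` are the sets of white and black triangles.  Each triangle has one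
vertex of each color (`wvert`, `bvert`) and one edge of each color (the edge of
color `c` being opposite the vertex of color `c`); across its edge of color `c`
a white triangle `w` meets the black triangle `wadj w c`, and a black triangle
`b` meets the white triangle `badj b c`.  The two triangles sharing an edge of
color `c` share their vertices of the other two colors (`bvert_wadj`).
A planar trinity carries a distinguished outer white triangle (`outer = some o`);
for a toric trinity `outer = none`. -/

structure Trinity where
  Vertex : Type
  White : Type
  Black : Type
  [vertexFintype : Fintype Vertex]
  [whiteFintype : Fintype White]
  [blackFintype : Fintype Black]
  [vertexDecEq : DecidableEq Vertex]
  [whiteDecEq : DecidableEq White]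
  [blackDecEq : DecidableEq Black]
  outer : Option White
  vcol : Vertex → Fin 3
  wvert : White → Fin 3 → Vertex
  bvert : Black → Fin 3 → Vertex
  wadj : White → Fin 3 → Black
  badj : Black → Fin 3 → White
  wvert_col : ∀ w c, vcol (wvert w c) = c
  bvert_col : ∀ b c, vcol (bvert b c) = c
  badj_wadj : ∀ w c, badj (wadj w c) c = w
  wadj_badj : ∀ b c, wadj (badj b c) c = b
  bvert_wadj : ∀ w c c', c' ≠ c → bvert (wadj w c) c' = wvert w c'

attribute [instance] Trinity.vertexFintype Trinity.whiteFintype Trinity.blackFintype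
  Trinity.vertexDecEq Trinity.whiteDecEq Trinity.blackDecEq

namespace Trinity

variable (T : Trinity)

/-- `w` is the outer white triangle. -/
def IsOuter (w : T.White) : Prop := T.outer = some w

instance : DecidablePred T.IsOuter := fun w => decidable_of_iff (T.outer = some w) Iff.rfl

/-- `v` is a root, i.e. a vertex of the outer white triangle (planar case). -/
def IsRoot (v : T.Vertex) : Prop := ∃ w, T.IsOuter w ∧ ∃ c, v = T.wvert w c

/-- A Tutte matching (state): a perfect matching between the non-outer white
triangles and incident non-root vertices.  (For a toric trinity, `IsOuter` and
`IsRoot` are empty conditions, so this is a perfect matching between all white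
triangles and all vertices.)  The value on the outer white triangle, if any, is
irrelevant and is normalized by `outer_spec`. -/
structure State where
  toFun : T.White → T.Vertex
  incident : ∀ w, ∃ c, toFun w = T.wvert w c
  injOn : ∀ w w', ¬ T.IsOuter w → ¬ T.IsOuter w' → toFun w = toFun w' → w = w'
  not_root : ∀ w, ¬ T.IsOuter w → ¬ T.IsRoot (toFun w)
  surj : ∀ v, ¬ T.IsRoot v → ∃ w, ¬ T.IsOuter w ∧ toFun w = v
  outer_spec : ∀ w, T.IsOuter w → toFun w = T.wvert w 0

namespace State

variable {T}

/-- The black triangle through which the arrow representing the match of the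
white triangle `w` passes: the arrow of the match `(w, s w)` crosses the edge
of `w` opposite the matched vertex `s w` (the edge of color `vcol (s w)`). -/
def arrowBlack (s : T.State) (w : T.White) : T.Black := T.wadj w (T.vcol (s.toFun w))

/-- The black triangle `b` is empty in the state `s`: no arrow passes through it. -/
def EmptyAt (s : T.State) (b : T.Black) : Prop :=
  ∀ w, ¬ T.IsOuter w → s.arrowBlack w ≠ b

/-- `b` is a clockwise empty black triangle of `s`:  it is empty and its three
vertices are matched with the three adjacent white triangles in the clockwise
rotational pattern. -/
def IsCW (s : T.State) (b : T.Black) : Prop :=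
  s.EmptyAt b ∧ ∀ c, s.toFun (T.badj b c) = T.bvert b (c + 1)

/-- `b` is a counter-clockwise empty black triangle of `s`. -/
def IsCCW (s : T.State) (b : T.Black) : Prop :=
  s.EmptyAt b ∧ ∀ c, s.toFun (T.badj b c) = T.bvert b (c + 2)

end State

/-- The basic clockwise move (clock move) about the empty black triangle `b`,
turning it from clockwise to counter-clockwise: `t` is obtained from `s` by
changing `b`. -/
def CWMoveAt (s t : T.State) (b : T.Black) : Prop :=
  s.IsCW b ∧ (∀ c, t.toFun (T.badj b c) = T.bvert b (c + 2)) ∧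
    ∀ w, (∀ c, w ≠ T.badj b c) → t.toFun w = s.toFun w

/-- A walk in the state transition graph, recording for each step the black
triangle about which the move is performed and the direction of the move
(`true` = clockwise, `false` = counter-clockwise). -/
inductive Walk : T.State → List (T.Black × Bool) → T.State → Prop
  | nil (s : T.State) : Walk s [] s
  | cw {s t u : T.State} {b : T.Black} {l : List (T.Black × Bool)} :
      T.CWMoveAt s t b → Walk t l u → Walk s ((b, true) :: l) u
  | ccw {s t u : T.State} {b : T.Black} {l : List (T.Black × Bool)} :
      T.CWMoveAt t s b → Walk t l u → Walk s ((b, false) :: l) u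

/-- Two states lie in the same connected component of the state transition
graph. -/
def Reaches (s t : T.State) : Prop := ∃ l, T.Walk s l t

/-- A walk consisting of clockwise moves only, about the listed black triangles. -/
def CWWalk (s : T.State) (l : List T.Black) (t : T.State) : Prop :=
  T.Walk s (l.map fun b => (b, true)) t

/-- A state is recurrent if some non-empty sequence of clockwise moves starts
and ends at it. -/
def Recurrent (s : T.State) : Prop := ∃ l : List T.Black, l ≠ [] ∧ T.CWWalk s l s

/-- `s` belongs to an acyclic component of the state transition graph: no state
in its component is recurrent. -/
def InAcyclic (s : T.State) : Prop := ∀ t, T.Reaches s t → ¬ T.Recurrent t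

/-- Two white triangles sharing an adjacent black triangle. -/
def WAdj (w w' : T.White) : Prop := ∃ c c', T.wadj w c = T.wadj w' c'

/-- Rotation (by one step, in the direction induced by the orientation) of the
white triangles around the vertex `v`. -/
def rotAt (v : T.Vertex) (w : T.White) : T.White :=
  T.badj (T.wadj w (T.vcol v + 1)) (T.vcol v + 2)

/-- The combinatorial data encode a closed connected oriented surface: the
triangles form a connected complex and the link of every vertex is a single
cycle of triangles. -/
def Surface : Prop :=
  (∀ w w' : T.White, Relation.ReflTransGen T.WAdj w w') ∧
  ∀ (v : T.Vertex) (w w' : T.White), T.wvert w (T.vcol v) = v → T.wvert w' (T.vcol v) = v →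
    ∃ k : ℕ, (T.rotAt v)^[k] w = w'

/-- A planar trinity: a trinity on the sphere (Euler characteristic 2) with a
distinguished outer white triangle. -/
def Planar : Prop :=
  T.Surface ∧ T.outer.isSome ∧ Fintype.card T.Vertex = Fintype.card T.White + 2

/-- A toric trinity: a trinity on the torus (Euler characteristic 0), with all
triangles and vertices taking part in matchings. -/
def Toric : Prop :=
  T.Surface ∧ T.outer = none ∧ Fintype.card T.Vertex = Fintype.card T.White

/-- The configuration of a general clock move: three white triangles `W 0, W 1,
W 2` and three vertices `u 0, u 1, u 2` (one of each color) such that `W c`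
contains the vertices `u c'` for both colors `c' ≠ c`; the three edges of
colors `c` of the triangles `W c` then form a closed triangle of edges through
the vertices `u`, bounding a disk on the side opposite to the whites.
(For the boundary of a black triangle `b` this recovers `W = T.badj b`,
`u = T.bvert b`.) -/
def CombConfig (W : Fin 3 → T.White) (u : Fin 3 → T.Vertex) : Prop :=
  ∀ c c' : Fin 3, c' ≠ c → T.wvert (W c) c' = u c'

/-- A general clockwise move from `s` to `t`: about some clock-move
configuration whose three (non-outer) white triangles are matched with its
three vertices, the matching is switched from the clockwise pattern to the
counter-clockwise one, all other matches being kept. -/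
def CWMove (s t : T.State) : Prop :=
  ∃ (W : Fin 3 → T.White) (u : Fin 3 → T.Vertex),
    T.CombConfig W u ∧ (∀ c, ¬ T.IsOuter (W c)) ∧
    (∀ c, s.toFun (W c) = u (c + 1)) ∧ (∀ c, t.toFun (W c) = u (c + 2)) ∧
    ∀ w, (∀ c, w ≠ W c) → t.toFun w = s.toFun w

/-- `P` exhibits the closed triangle of edges determined by the clock-move
configuration `W` as separating: `P` is a two-coloring of the triangles which
changes value exactly across the three edges of the configuration, the white
triangles `W c` being on the `P`-side. -/
def ConfigCut (W : Fin 3 → T.White) (P : T.White ⊕ T.Black → Prop) : Prop :=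
  (∀ (w : T.White) (c : Fin 3), (∀ c₀, ¬ (w = W c₀ ∧ c = c₀)) →
    (P (Sum.inl w) ↔ P (Sum.inr (T.wadj w c)))) ∧
  (∀ c, P (Sum.inl (W c))) ∧ (∀ c, ¬ P (Sum.inr (T.wadj (W c) c)))

/-- A trinity is irreducible if it is not the trinity `F` with a single black
and a single white triangle, and it is not a nontrivial connected sum; i.e.
every separating closed triangle of edges cuts off a single triangle. -/
def Irreducible : Prop :=
  1 < Fintype.card T.White ∧
  ∀ (W : Fin 3 → T.White) (u : Fin 3 → T.Vertex) (P : T.White ⊕ T.Black → Prop),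
    T.CombConfig W u → T.ConfigCut W P →
      (∃ b : T.Black, ∀ x, ¬ P x ↔ x = Sum.inr b) ∨
      (∃ w : T.White, ∀ x, P x ↔ x = Sum.inl w)

/-! ### The directed dual graphs `G_X^*`

For a color `X`, the vertices of the directed graph `G_X^*` are the vertices of
the trinity of color `X` and its directed edges are in natural bijection with
the white triangles: the white triangle `w` corresponds to the dual edge of its
edge of color `X`, directed from the vertex of color `X` of the adjacent black
triangle `wadj w X` (its tail) to the vertex of color `X` of `w` (its head).
The arrows of a state pointing to vertices of color `X` are edges of `G_X^*`. -/

/-- The head of the edge of `G_X^*` corresponding to the white triangle `w`. -/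
def head (X : Fin 3) (w : T.White) : T.Vertex := T.wvert w X

/-- The tail of the edge of `G_X^*` corresponding to the white triangle `w`. -/
def tail (X : Fin 3) (w : T.White) : T.Vertex := T.bvert (T.wadj w X) X

/-- One-step reachability in `G_X^*` along edges from the set `A`. -/
def ARel (X : Fin 3) (A : Finset T.White) (a b : T.Vertex) : Prop :=
  ∃ w ∈ A, T.tail X w = a ∧ T.head X w = b

/-- `A` is a spanning arborescence of `G_X^*`, rooted at the root of color `X`
(the vertex of color `X` of the outer triangle `o`): a spanning tree all of
whose edges point away from the root. -/
def IsArborescence (X : Fin 3) (o : T.White) (A : Finset T.White) : Prop :=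
  (∀ w ∈ A, T.head X w ≠ T.wvert o X) ∧
  (∀ v : T.Vertex, T.vcol v = X → v ≠ T.wvert o X → ∃! w, w ∈ A ∧ T.head X w = v) ∧
  (∀ v : T.Vertex, T.vcol v = X → Relation.ReflTransGen (T.ARel X A) (T.wvert o X) v)

/-- One step of the tour tracing (counter-clockwise) the boundary of a small
neighborhood of the spanning tree `A` in `G_X^*`.  A position of the tour is a
dart `(w, d)`: the edge `w` of `G_X^*` together with a direction (`true`:
towards the head, `false`: towards the tail).  From the end of the dart one
rotates to the next edge-end around the vertex; if that edge belongs to `A` it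
is traversed away from the vertex, and otherwise its end is crossed (recorded
by bouncing back towards the vertex). -/
def tourStep (X : Fin 3) (A : Finset T.White) : T.White × Bool → T.White × Bool :=
  fun p =>
    if p.2 then
      let w' := T.badj (T.wadj p.1 (X + 1)) X
      (w', decide (w' ∈ A))
    else
      let w' := T.badj (T.wadj p.1 X) (X + 2)
      (w', decide (w' ∉ A))

/-- The position of the edge `w` of `G_X^*` in the ordering `<_A` determined by
the spanning arborescence `A`: the first time the boundary tour of a
neighborhood of `A` (started on the outer white triangle `o`, i.e. at the dart
arriving at the root through `o`) travels along `w` (if `w ∈ A`) or crosses an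
end of `w` (if `w ∉ A`). -/
noncomputable def ordIdx (X : Fin 3) (o : T.White) (A : Finset T.White) (w : T.White) : ℕ :=
  sInf {k : ℕ | ((T.tourStep X A)^[k] (o, true)).1 = w}

/-- `A` is the clocked arborescence of `G_X^*`: the spanning arborescence such
that for every non-root vertex `y` of color `X`, the edge of `A` pointing to
`y` is smallest, with respect to the ordering `<_A`, among all edges of
`G_X^*` terminating at `y`. -/
def IsClocked (X : Fin 3) (o : T.White) (A : Finset T.White) : Prop :=
  T.IsArborescence X o A ∧
    ∀ w ∈ A, ∀ w' : T.White, w' ≠ w → T.head X w' = T.head X w →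
      T.ordIdx X o A w < T.ordIdx X o A w'

/-! ### Wreaths (toric trinities) -/

/-- A nonempty set `C` of edges of `G_R^*` forming a single (directed) cycle:
at every red vertex the in-degree and out-degree in `C` agree and are at most
one, and `C` is connected. -/
def IsDirCycle (C : Finset T.White) : Prop :=
  C.Nonempty ∧
  (∀ v : T.Vertex, T.vcol v = 0 →
    (C.filter fun w => T.head 0 w = v).card = (C.filter fun w => T.tail 0 w = v).card ∧
    (C.filter fun w => T.head 0 w = v).card ≤ 1) ∧
  ∀ w ∈ C, ∀ w' ∈ C,
    Relation.ReflTransGen (fun a b => a ∈ C ∧ b ∈ C ∧ T.head 0 a = T.tail 0 b) w w'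

/-- The cycle `C` of edges of `G_R^*` separates the surface: the faces of
`G_R^*` (which correspond to the green and blue vertices of the trinity) can be
two-colored so that the two faces adjacent along an edge of `G_R^*` (namely the
faces of the green and the blue endpoint of the crossed red edge) get the same
color exactly when the edge does not belong to `C`. -/
def SeparatingSet (C : Finset T.White) : Prop :=
  ∃ P : T.Vertex → Prop,
    (∀ w : T.White, w ∉ C → (P (T.wvert w 1) ↔ P (T.wvert w 2))) ∧
    ∀ w ∈ C, ¬ (P (T.wvert w 1) ↔ P (T.wvert w 2))

/-- A wreath: a set `W` of edges of the directed dual graph `G_R^*` such that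
every red vertex has exactly one edge of `W` pointing to it and the edges of
`W` form no separating cycle. -/
def IsWreath (W : Finset T.White) : Prop :=
  (∀ v : T.Vertex, T.vcol v = 0 → ∃! w, w ∈ W ∧ T.head 0 w = v) ∧
  ∀ C ⊆ W, T.IsDirCycle C → ¬ T.SeparatingSet C


/-! ### Auxiliary lemmas -/

section Aux

variable {T : Trinity}

theorem State.ext' {s t : T.State} (h : s.toFun = t.toFun) : s = t := by
  cases s; cases t; cases h; rfl

theorem outer_unique {w w' : T.White} (h : T.IsOuter w) (h' : T.IsOuter w') : w = w' := by
  unfold Trinity.IsOuter at h h'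
  rw [h] at h'; exact Option.some.inj h'

theorem bvert_eq_wvert (b : T.Black) {c c' : Fin 3} (h : c' ≠ c) :
    T.bvert b c' = T.wvert (T.badj b c) c' := by
  conv_lhs => rw [← T.wadj_badj b c]
  exact T.bvert_wadj _ _ _ h

theorem bvert_inj {b : T.Black} {c c' : Fin 3} (h : T.bvert b c = T.bvert b c') : c = c' := by
  have := T.bvert_col b c
  rw [h, T.bvert_col] at this
  exact this.symm

theorem wadj_eq_iff {w : T.White} {c : Fin 3} {b : T.Black} :
    T.wadj w c = b ↔ T.badj b c = w :=
  ⟨fun h => by rw [← h, T.badj_wadj], fun h => by rw [← h, T.wadj_badj]⟩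

namespace State

theorem cw_distinct {s : T.State} {b : T.Black} (hb : s.IsCW b) {c c' : Fin 3}
    (h : T.badj b c = T.badj b c') : c = c' := by
  have h2 := hb.2 c
  rw [h, hb.2 c'] at h2
  have := bvert_inj h2
  omega

theorem ccw_distinct {s : T.State} {b : T.Black} (hb : s.IsCCW b) {c c' : Fin 3}
    (h : T.badj b c = T.badj b c') : c = c' := by
  have h2 := hb.2 c
  rw [h, hb.2 c'] at h2
  have := bvert_inj h2
  omega

theorem cw_not_outer {s : T.State} {b : T.Black} (hb : s.IsCW b) (c : Fin 3) :
    ¬ T.IsOuter (T.badj b c) := by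
  intro ho
  refine s.not_root (T.badj b (c+1)) (fun ho' => ?_) ?_
  · have : c + 1 = c := cw_distinct hb (outer_unique ho' ho)
    omega
  · refine ⟨T.badj b c, ho, c + 2, ?_⟩
    rw [hb.2 (c+1)]
    have h1 : (c : Fin 3) + 1 + 1 = c + 2 := by omega
    rw [h1]
    exact bvert_eq_wvert b (by omega)

theorem ccw_not_outer {s : T.State} {b : T.Black} (hb : s.IsCCW b) (c : Fin 3) :
    ¬ T.IsOuter (T.badj b c) := by
  intro ho
  refine s.not_root (T.badj b (c+2)) (fun ho' => ?_) ?_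
  · have : c + 2 = c := ccw_distinct hb (outer_unique ho' ho)
    omega
  · refine ⟨T.badj b c, ho, c + 1, ?_⟩
    rw [hb.2 (c+2)]
    have h1 : (c : Fin 3) + 2 + 2 = c + 1 := by omega
    rw [h1]
    exact bvert_eq_wvert b (by omega)

theorem cw_cw_disjoint {s : T.State} {b b' : T.Black} (hb : s.IsCW b) (hb' : s.IsCW b')
    (hne : b ≠ b') (c c' : Fin 3) : T.badj b c ≠ T.badj b' c' := by
  intro h
  have h2 := hb.2 c
  rw [h, hb'.2 c'] at h2
  have hcol := congrArg T.vcol h2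
  rw [T.bvert_col, T.bvert_col] at hcol
  have hc : c = c' := by omega
  subst hc
  exact hne (by rw [← T.wadj_badj b c, h, T.wadj_badj])

theorem ccw_ccw_disjoint {s : T.State} {b b' : T.Black} (hb : s.IsCCW b) (hb' : s.IsCCW b')
    (hne : b ≠ b') (c c' : Fin 3) : T.badj b c ≠ T.badj b' c' := by
  intro h
  have h2 := hb.2 c
  rw [h, hb'.2 c'] at h2
  have hcol := congrArg T.vcol h2
  rw [T.bvert_col, T.bvert_col] at hcol
  have hc : c = c' := by omega
  subst hc
  exact hne (by rw [← T.wadj_badj b c, h, T.wadj_badj])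

end State

namespace CWMoveAt
open State

/-- L4: after a clockwise move at `b`, the triangle `b` is counter-clockwise. -/
theorem isCCW {s t : T.State} {b : T.Black} (h : T.CWMoveAt s t b) : t.IsCCW b := by
  obtain ⟨hcw, hnew, hold⟩ := h
  have hdist : ∀ c c' : Fin 3, T.badj b c = T.badj b c' → c = c' := by
    intro c c' hcc
    have h2 := hnew c
    rw [hcc, hnew c'] at h2
    have := bvert_inj h2; omega
  refine ⟨?_, hnew⟩
  intro w hw hwb
  rcases Classical.em (∃ c, w = T.badj b c) with ⟨c, rfl⟩ | hnot
  · unfold State.arrowBlack at hwb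
    rw [hnew c] at hwb
    rw [T.bvert_col] at hwb
    rw [wadj_eq_iff] at hwb
    have := hdist _ _ hwb
    omega
  · push_neg at hnot
    unfold State.arrowBlack at hwb
    rw [hold w hnot] at hwb
    exact hcw.1 w hw hwb

/-- determinism forward -/
theorem det {s t t' : T.State} {b : T.Black} (h : T.CWMoveAt s t b)
    (h' : T.CWMoveAt s t' b) : t = t' := by
  refine State.ext' (funext fun w => ?_)
  rcases Classical.em (∃ c, w = T.badj b c) with ⟨c, rfl⟩ | hnot
  · rw [h.2.1 c, h'.2.1 c]
  · push_neg at hnot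
    rw [h.2.2 w hnot, h'.2.2 w hnot]

/-- determinism backward -/
theorem det' {s s' t : T.State} {b : T.Black} (h : T.CWMoveAt s t b)
    (h' : T.CWMoveAt s' t b) : s = s' := by
  refine State.ext' (funext fun w => ?_)
  rcases Classical.em (∃ c, w = T.badj b c) with ⟨c, rfl⟩ | hnot
  · rw [h.1.2 c, h'.1.2 c]
  · push_neg at hnot
    rw [← h.2.2 w hnot, ← h'.2.2 w hnot]

/-- L3: a clockwise triangle persists under a move at another triangle. -/
theorem cw_persist {p q : T.State} {e e' : T.Black} (h : T.CWMoveAt p q e)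
    (he' : p.IsCW e') (hne : e' ≠ e) : q.IsCW e' := by
  have hdisj := cw_cw_disjoint h.1 he' (Ne.symm hne)
  constructor
  · intro w hw hwb
    rcases Classical.em (∃ c, w = T.badj e c) with ⟨c, rfl⟩ | hnot
    · unfold State.arrowBlack at hwb
      rw [h.2.1 c, T.bvert_col, wadj_eq_iff] at hwb
      exact hdisj c (c+2) hwb.symm
    · push_neg at hnot
      unfold State.arrowBlack at hwb
      rw [h.2.2 w hnot] at hwb
      exact he'.1 w hw hwb
  · intro c
    rw [h.2.2 _ (fun c' hh => hdisj c' c hh.symm)]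
    exact he'.2 c

/-- L3': a counter-clockwise triangle persists backward under a move at another triangle. -/
theorem ccw_persist {p q : T.State} {e e' : T.Black} (h : T.CWMoveAt p q e)
    (he' : q.IsCCW e') (hne : e' ≠ e) : p.IsCCW e' := by
  have hq : q.IsCCW e := h.isCCW
  have hdisj := ccw_ccw_disjoint hq he' (Ne.symm hne)
  constructor
  · intro w hw hwb
    rcases Classical.em (∃ c, w = T.badj e c) with ⟨c, rfl⟩ | hnot
    · unfold State.arrowBlack at hwb
      rw [h.1.2 c, T.bvert_col, wadj_eq_iff] at hwb
      exact hdisj c (c+1) hwb.symm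
    · push_neg at hnot
      unfold State.arrowBlack at hwb
      rw [← h.2.2 w hnot] at hwb
      exact he'.1 w hw hwb
  · intro c
    rw [← h.2.2 _ (fun c' hh => hdisj c' c hh.symm)]
    exact he'.2 c

end CWMoveAt

end Aux

section Moves

variable {T : Trinity}

open State

/-- Generic construction: rotate the matching around the black triangle `b` by `d`. -/
theorem exists_shift (s : T.State) (b : T.Black) (g : Fin 3 → Fin 3) (d : Fin 3)
    (hdist : ∀ c c' : Fin 3, T.badj b c = T.badj b c' → c = c')
    (hno : ∀ c, ¬ T.IsOuter (T.badj b c))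
    (hval : ∀ c, s.toFun (T.badj b c) = T.bvert b (g c))
    (hg : ∀ c, g (c + d) ≠ c) :
    ∃ t : T.State, (∀ c, t.toFun (T.badj b c) = T.bvert b (g (c + d))) ∧
      ∀ u, (∀ c, u ≠ T.badj b c) → t.toFun u = s.toFun u := by
  classical
  set w := T.badj b with hw
  let σ : T.White → T.White := fun u => if h : ∃ c, u = w c then w (h.choose + d) else u
  let σ' : T.White → T.White := fun u => if h : ∃ c, u = w c then w (h.choose - d) else u
  have hchoose : ∀ (c : Fin 3) (h : ∃ c', w c = w c'), h.choose = c :=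
    fun c h => (hdist _ _ h.choose_spec.symm)
  have hσw : ∀ c, σ (w c) = w (c + d) := by
    intro c
    have h : ∃ c', w c = w c' := ⟨c, rfl⟩
    simp only [σ, dif_pos h]
    rw [hchoose c h]
  have hσ'w : ∀ c, σ' (w c) = w (c - d) := by
    intro c
    have h : ∃ c', w c = w c' := ⟨c, rfl⟩
    simp only [σ', dif_pos h]
    rw [hchoose c h]
  have hσid : ∀ u, (∀ c, u ≠ w c) → σ u = u := by
    intro u hu
    have h : ¬ ∃ c, u = w c := by push_neg; exact hu
    simp only [σ, dif_neg h]
  have hσ'id : ∀ u, (∀ c, u ≠ w c) → σ' u = u := by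
    intro u hu
    have h : ¬ ∃ c, u = w c := by push_neg; exact hu
    simp only [σ', dif_neg h]
  have hσσ' : ∀ u, σ' (σ u) = u := by
    intro u
    by_cases h : ∃ c, u = w c
    · obtain ⟨c, rfl⟩ := h
      rw [hσw, hσ'w]
      congr 1
      omega
    · push_neg at h
      rw [hσid u h, hσ'id u h]
  have hσ'σ : ∀ u, σ (σ' u) = u := by
    intro u
    by_cases h : ∃ c, u = w c
    · obtain ⟨c, rfl⟩ := h
      rw [hσ'w, hσw]
      congr 1
      omega
    · push_neg at h
      rw [hσ'id u h, hσid u h]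
  have hσno : ∀ u, ¬ T.IsOuter u → ¬ T.IsOuter (σ u) := by
    intro u hu
    by_cases h : ∃ c, u = w c
    · obtain ⟨c, rfl⟩ := h
      rw [hσw]; exact hno _
    · push_neg at h
      rw [hσid u h]; exact hu
  have hσ'no : ∀ u, ¬ T.IsOuter u → ¬ T.IsOuter (σ' u) := by
    intro u hu
    by_cases h : ∃ c, u = w c
    · obtain ⟨c, rfl⟩ := h
      rw [hσ'w]; exact hno _
    · push_neg at h
      rw [hσ'id u h]; exact hu
  refine ⟨⟨fun u => s.toFun (σ u), ?_, ?_, ?_, ?_, ?_⟩, ?_, ?_⟩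
  · -- incident
    intro u
    by_cases h : ∃ c, u = w c
    · obtain ⟨c, rfl⟩ := h
      refine ⟨g (c + d), ?_⟩
      rw [hσw, hval]
      exact bvert_eq_wvert b (hg c)
    · push_neg at h
      rw [hσid u h]
      exact s.incident u
  · -- injOn
    intro u u' hu hu' heq
    have h1 := s.injOn _ _ (hσno u hu) (hσno u' hu') heq
    have h2 := congrArg σ' h1
    rwa [hσσ', hσσ'] at h2
  · -- not_root
    intro u hu
    exact s.not_root _ (hσno u hu)
  · -- surj
    intro v hv
    obtain ⟨u, hu, huv⟩ := s.surj v hv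
    refine ⟨σ' u, hσ'no u hu, ?_⟩
    rw [hσ'σ]
    exact huv
  · -- outer_spec
    intro u hu
    have h : ∀ c, u ≠ w c := fun c hc => hno c (hc ▸ hu)
    rw [hσid u h]
    have h0 := s.outer_spec u hu
    exact h0
  · -- values on the trio
    intro c
    simp only
    rw [hσw, hval]
  · -- values off the trio
    intro u hu
    simp only
    rw [hσid u hu]

/-- L2: a clockwise empty triangle admits a clockwise move. -/
theorem State.IsCW.move_exists {s : T.State} {b : T.Black} (hb : s.IsCW b) :
    ∃ t, T.CWMoveAt s t b := by
  obtain ⟨t, ht1, ht2⟩ := exists_shift s b (fun c => c + 1) 1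
    (fun c c' h => cw_distinct hb h) (cw_not_outer hb) hb.2 (by intro c; omega)
  refine ⟨t, hb, fun c => ?_, ht2⟩
  rw [ht1 c]
  congr 1
  omega

/-- L2': a counter-clockwise empty triangle admits a counter-clockwise move. -/
theorem State.IsCCW.move_exists {s : T.State} {b : T.Black} (hb : s.IsCCW b) :
    ∃ t, T.CWMoveAt t s b := by
  obtain ⟨t, ht1, ht2⟩ := exists_shift s b (fun c => c + 2) 2
    (fun c c' h => ccw_distinct hb h) (ccw_not_outer hb) hb.2 (by intro c; omega)
  have htval : ∀ c, t.toFun (T.badj b c) = T.bvert b (c + 1) := by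
    intro c
    rw [ht1 c]
    congr 1
    omega
  have hdist : ∀ c c' : Fin 3, T.badj b c = T.badj b c' → c = c' :=
    fun c c' h => ccw_distinct hb h
  refine ⟨t, ⟨?_, htval⟩, hb.2, fun u hu => (ht2 u hu).symm⟩
  -- t.EmptyAt b
  intro u hu hub
  by_cases h : ∃ c, u = T.badj b c
  · obtain ⟨c, rfl⟩ := h
    unfold State.arrowBlack at hub
    rw [htval c, T.bvert_col, wadj_eq_iff] at hub
    have := hdist _ _ hub
    omega
  · push_neg at h
    unfold State.arrowBlack at hub
    rw [ht2 u h] at hub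
    exact hb.1 u hu hub

end Moves

section Diamonds

variable {T : Trinity}

open State

/-- Forward diamond: two distinct clockwise moves from a common state commute. -/
theorem fwd_diamond {a x y : T.State} {b b' : T.Black} (hx : T.CWMoveAt a x b)
    (hy : T.CWMoveAt a y b') (hne : b ≠ b') :
    ∃ z, T.CWMoveAt x z b' ∧ T.CWMoveAt y z b := by
  have hxb' : x.IsCW b' := hx.cw_persist hy.1 (Ne.symm hne)
  obtain ⟨z, hz⟩ := hxb'.move_exists
  have hdisj := cw_cw_disjoint hx.1 hy.1 hne
  refine ⟨z, hz, hy.cw_persist hx.1 hne, ?_, ?_⟩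
  · intro c
    rw [hz.2.2 _ (fun c' hh => hdisj c c' hh), hx.2.1 c]
  · intro u hu
    by_cases h : ∃ c, u = T.badj b' c
    · obtain ⟨c, rfl⟩ := h
      rw [hz.2.1 c, hy.2.1 c]
    · push_neg at h
      rw [hz.2.2 u h, hx.2.2 u hu, ← hy.2.2 u h]

/-- Backward diamond: two distinct counter-clockwise moves from a common state commute. -/
theorem bwd_diamond {a y y' : T.State} {b b' : T.Black} (hy : T.CWMoveAt a y b')
    (hy' : T.CWMoveAt y' y b) (hne : b ≠ b') :
    ∃ d, T.CWMoveAt d a b ∧ T.CWMoveAt d y' b' := by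
  have hyb : y.IsCCW b := hy'.isCCW
  have hyb' : y.IsCCW b' := hy.isCCW
  have hdisj := ccw_ccw_disjoint hyb hyb' hne
  have hab : a.IsCCW b := hy.ccw_persist hyb hne
  obtain ⟨d, hd⟩ := hab.move_exists
  refine ⟨d, hd, ⟨?_, ?_⟩, ?_, ?_⟩
  · -- d.EmptyAt b'
    intro u hu hub
    by_cases h : ∃ c, u = T.badj b c
    · obtain ⟨c, rfl⟩ := h
      unfold State.arrowBlack at hub
      rw [hd.1.2 c, T.bvert_col, wadj_eq_iff] at hub
      exact hdisj c (c+1) hub.symm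
    · push_neg at h
      unfold State.arrowBlack at hub
      rw [← hd.2.2 u h] at hub
      exact hy.1.1 u hu hub
  · -- d's pattern at b'
    intro c
    rw [← hd.2.2 _ (fun c' hh => hdisj c' c hh.symm), hy.1.2 c]
  · -- y' values at trio b'
    intro c
    rw [← hy'.2.2 _ (fun c' hh => hdisj c' c hh.symm), hy.2.1 c]
  · -- off trio b'
    intro u hu
    by_cases h : ∃ c, u = T.badj b c
    · obtain ⟨c, rfl⟩ := h
      rw [hy'.1.2 c, hd.1.2 c]
    · push_neg at h
      rw [← hy'.2.2 u h, hy.2.2 u hu, hd.2.2 u h]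

end Diamonds

section Walks

variable {T : Trinity}

theorem Walk.append : ∀ {s t u : T.State} {L1 L2 : List (T.Black × Bool)},
    T.Walk s L1 t → T.Walk t L2 u → T.Walk s (L1 ++ L2) u := by
  intro s t u L1 L2 h1 h2
  induction h1 with
  | nil => exact h2
  | cw hm _ ih => exact Trinity.Walk.cw hm (ih h2)
  | ccw hm _ ih => exact Trinity.Walk.ccw hm (ih h2)

theorem cwwalk_nil {s t : T.State} (h : T.CWWalk s [] t) : t = s := by
  unfold Trinity.CWWalk at h
  rw [List.map_nil] at h
  cases h
  rfl

theorem cwwalk_nil' (s : T.State) : T.CWWalk s [] s := Trinity.Walk.nil s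

theorem cwwalk_cons {s t : T.State} {b : T.Black} {l : List T.Black}
    (h : T.CWWalk s (b :: l) t) : ∃ x, T.CWMoveAt s x b ∧ T.CWWalk x l t := by
  unfold Trinity.CWWalk at h
  rw [List.map_cons] at h
  cases h with
  | cw hm hw => exact ⟨_, hm, hw⟩

theorem cwwalk_cons' {s x t : T.State} {b : T.Black} {l : List T.Black}
    (hm : T.CWMoveAt s x b) (h : T.CWWalk x l t) : T.CWWalk s (b :: l) t :=
  Trinity.Walk.cw hm h

theorem cwwalk_append {s x t : T.State} {l1 l2 : List T.Black}
    (h1 : T.CWWalk s l1 x) (h2 : T.CWWalk x l2 t) : T.CWWalk s (l1 ++ l2) t := by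
  unfold Trinity.CWWalk at *
  rw [List.map_append]
  exact Walk.append h1 h2

theorem cwwalk_concat_split : ∀ (l : List T.Black) {s z : T.State} {b : T.Black},
    T.CWWalk s (l ++ [b]) z → ∃ y, T.CWWalk s l y ∧ T.CWMoveAt y z b := by
  intro l
  induction l with
  | nil =>
    intro s z b h
    obtain ⟨x, hm, hw⟩ := cwwalk_cons h
    have := cwwalk_nil hw
    subst this
    exact ⟨s, cwwalk_nil' s, hm⟩
  | cons c l ih =>
    intro s z b h
    obtain ⟨x, hm, hw⟩ := cwwalk_cons h
    obtain ⟨y, hy, hyz⟩ := ih hw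
    exact ⟨y, cwwalk_cons' hm hy, hyz⟩

end Walks

section Strips

variable {T : Trinity}

/-- Forward strip lemma. -/
theorem stripF : ∀ (l : List T.Black) {a x t : T.State} {b : T.Black},
    T.CWMoveAt a x b → T.CWWalk a l t →
    (b ∈ l ∧ ∃ l', T.CWWalk x l' t ∧
      ∀ c, l'.count c = l.count c - (if c = b then 1 else 0)) ∨
    (b ∉ l ∧ ∃ t', T.CWMoveAt t t' b ∧ T.CWWalk x l t') := by
  intro l
  induction l with
  | nil =>
    intro a x t b hax h
    have := cwwalk_nil h
    subst this
    exact Or.inr ⟨by simp, x, hax, cwwalk_nil' x⟩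
  | cons b' l ih =>
    intro a x t b hax h
    obtain ⟨y, hy, hyl⟩ := cwwalk_cons h
    by_cases hbb : b' = b
    · subst hbb
      have hxy := hax.det hy
      subst hxy
      refine Or.inl ⟨List.mem_cons_self, l, hyl, ?_⟩
      intro c
      by_cases hc : c = b' <;> simp [List.count_cons, hc] <;> exact Ne.symm hc
    · obtain ⟨z, hxz, hyz⟩ := fwd_diamond hax hy (fun hh => hbb hh.symm)
      rcases ih hyz hyl with ⟨hbl, l', hl', hcnt⟩ | ⟨hbl, t', ht', hl'⟩
      · refine Or.inl ⟨List.mem_cons_of_mem _ hbl, b' :: l', cwwalk_cons' hxz hl', ?_⟩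
        intro c
        have := hcnt c
        by_cases hc : c = b <;> by_cases hc' : c = b' <;>
          simp_all [List.count_cons] <;> omega
      · refine Or.inr ⟨?_, t', ht', cwwalk_cons' hxz hl'⟩
        simp only [List.mem_cons, not_or]
        exact ⟨fun hh => hbb hh.symm, hbl⟩

/-- Backward strip lemma. -/
theorem stripB : ∀ (l : List T.Black) {A U V : T.State} {b : T.Black},
    T.CWWalk A l U → T.CWMoveAt V U b →
    (b ∈ l ∧ ∃ l', T.CWWalk A l' V ∧
      ∀ c, l'.count c = l.count c - (if c = b then 1 else 0)) ∨
    (b ∉ l ∧ ∃ A', T.CWMoveAt A' A b ∧ T.CWWalk A' l V) := by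
  intro l
  induction l with
  | nil =>
    intro A U V b h hVU
    have := cwwalk_nil h
    subst this
    exact Or.inr ⟨by simp, V, hVU, cwwalk_nil' V⟩
  | cons b' l ih =>
    intro A U V b h hVU
    obtain ⟨y, hAy, hyl⟩ := cwwalk_cons h
    rcases ih hyl hVU with ⟨hbl, l', hl', hcnt⟩ | ⟨hbl, y', hy', hy'l⟩
    · refine Or.inl ⟨List.mem_cons_of_mem _ hbl, b' :: l', cwwalk_cons' hAy hl', ?_⟩
      intro c
      have := hcnt c
      by_cases hc : c = b <;> by_cases hc' : c = b' <;> by_cases hbb' : b' = b <;>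
        simp_all [List.count_cons] <;> omega
    · by_cases hbb : b = b'
      · subst hbb
        have := hAy.det' hy'
        subst this
        refine Or.inl ⟨List.mem_cons_self, l, hy'l, ?_⟩
        intro c
        by_cases hc : c = b
        · subst hc
          have : l.count c = 0 := List.count_eq_zero.mpr hbl
          simp [List.count_cons, this]
        · simp [List.count_cons, hc, Ne.symm hc]
      · obtain ⟨d, hdA, hdy'⟩ := bwd_diamond hAy hy' hbb
        refine Or.inr ⟨?_, d, hdA, cwwalk_cons' hdy' hy'l⟩
        simp only [List.mem_cons, not_or]
        exact ⟨hbb, hbl⟩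

end Strips

section Residuals

variable {T : Trinity}

theorem count_singleton_eq {α : Type} [DecidableEq α] (c b : α) :
    ([b] : List α).count c = if c = b then 1 else 0 := by
  by_cases hc : c = b <;> simp [hc, List.count_singleton] <;> exact Ne.symm hc

/-- Forward residual lemma: two clockwise walks from a common state can be completed
to a common state, with truncated-difference multiplicities. -/
theorem residual : ∀ (ls : List T.Black) {a s t : T.State} {lt : List T.Black},
    T.CWWalk a ls s → T.CWWalk a lt t →
    ∃ (u : T.State) (lu lv : List T.Black), T.CWWalk s lu u ∧ T.CWWalk t lv u ∧
      (∀ c, lu.count c = lt.count c - ls.count c) ∧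
      (∀ c, lv.count c = ls.count c - lt.count c) := by
  intro ls
  induction ls with
  | nil =>
    intro a s t lt h hlt
    have := cwwalk_nil h
    subst this
    exact ⟨t, lt, [], hlt, cwwalk_nil' t, fun c => by simp, fun c => by simp⟩
  | cons b ls₁ ih =>
    intro a s t lt h hlt
    obtain ⟨x, hax, hx⟩ := cwwalk_cons h
    rcases stripF lt hax hlt with ⟨hbl, lt', hlt', hcnt⟩ | ⟨hbl, t', ht', hlt'⟩
    · obtain ⟨u, lu, lv, h1, h2, c1, c2⟩ := ih hx hlt'
      have hpos : 0 < lt.count b := List.count_pos_iff.mpr hbl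
      refine ⟨u, lu, lv, h1, h2, fun c => ?_, fun c => ?_⟩ <;>
      · have e1 := c1 c
        have e2 := c2 c
        have e3 := hcnt c
        by_cases hc : c = b
        · subst hc
          rw [if_pos rfl] at e3
          rw [List.count_cons_self]
          omega
        · rw [if_neg hc] at e3
          rw [List.count_cons_of_ne (Ne.symm hc)]
          omega
    · obtain ⟨u, lu, lv, h1, h2, c1, c2⟩ := ih hx hlt'
      have hz0 : lt.count b = 0 := List.count_eq_zero.mpr hbl
      refine ⟨u, lu, b :: lv, h1, cwwalk_cons' ht' h2, fun c => ?_, fun c => ?_⟩ <;>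
      · have e1 := c1 c
        have e2 := c2 c
        by_cases hc : c = b
        · subst hc
          repeat rw [List.count_cons_self]
          omega
        · repeat rw [List.count_cons_of_ne (Ne.symm hc)]
          omega

/-- Mirror residual lemma: two clockwise walks into a common state can be pulled back
to a common state. -/
theorem coresidual : ∀ (ps : List T.Black) {s t z : T.State} {pt : List T.Black},
    T.CWWalk s ps z → T.CWWalk t pt z →
    ∃ (d : T.State) (qs qt : List T.Black), T.CWWalk d qs s ∧ T.CWWalk d qt t ∧
      (∀ c, qs.count c = pt.count c - ps.count c) ∧
      (∀ c, qt.count c = ps.count c - pt.count c) := by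
  intro ps
  induction ps using List.reverseRecOn with
  | nil =>
    intro s t z pt h hpt
    have := cwwalk_nil h
    subst this
    exact ⟨t, pt, [], hpt, cwwalk_nil' t, fun c => by simp, fun c => by simp⟩
  | append_singleton ps₁ b ih =>
    intro s t z pt h hpt
    obtain ⟨y, hy, hyz⟩ := cwwalk_concat_split ps₁ h
    rcases stripB pt hpt hyz with ⟨hbl, pt', hpt', hcnt⟩ | ⟨hbl, t', ht', hpt'⟩
    · obtain ⟨d, qs, qt, h1, h2, c1, c2⟩ := ih hy hpt'
      have hpos : 0 < pt.count b := List.count_pos_iff.mpr hbl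
      refine ⟨d, qs, qt, h1, h2, fun c => ?_, fun c => ?_⟩ <;>
      · have e1 := c1 c
        have e2 := c2 c
        have e3 := hcnt c
        rw [List.count_append, count_singleton_eq]
        by_cases hc : c = b
        · subst hc
          rw [if_pos rfl] at e3 ⊢
          omega
        · rw [if_neg hc] at e3 ⊢
          omega
    · obtain ⟨d, qs, qt, h1, h2, c1, c2⟩ := ih hy hpt'
      have hz0 : pt.count b = 0 := List.count_eq_zero.mpr hbl
      refine ⟨d, qs, qt ++ [b], h1,
        cwwalk_append h2 (cwwalk_cons' ht' (cwwalk_nil' t)), fun c => ?_, fun c => ?_⟩ <;>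
      · have e1 := c1 c
        have e2 := c2 c
        repeat rw [List.count_append]
        repeat rw [count_singleton_eq]
        by_cases hc : c = b
        · subst hc
          repeat rw [if_pos rfl]
          omega
        · repeat rw [if_neg hc]
          omega

end Residuals

section Global

variable {T : Trinity}

instance : Finite T.State :=
  Finite.of_injective (fun s => s.toFun) (fun _ _ h => State.ext' h)

theorem normal_no_walk {z u : T.State} {l : List T.Black}
    (hn : ∀ b, ¬ z.IsCW b) (h : T.CWWalk z l u) : l = [] := by
  cases l with
  | nil => rfl
  | cons b l =>
    obtain ⟨x, hm, _⟩ := cwwalk_cons h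
    exact absurd hm.1 (hn b)

/-- Termination: any state reached from `a` in an acyclic component reaches a normal state. -/
theorem exists_normal {a : T.State} (hacyc : T.InAcyclic a) :
    ∀ s, T.Reaches a s → ∃ (l : List T.Black) (z : T.State),
      T.CWWalk s l z ∧ ∀ b, ¬ z.IsCW b := by
  have key : ∀ (n : ℕ) (s : T.State), T.Reaches a s →
      Set.ncard {u | ∃ l, T.CWWalk s l u} = n → ∃ l z, T.CWWalk s l z ∧ ∀ b, ¬ z.IsCW b := by
    intro n
    induction n using Nat.strong_induction_on with
    | _ n ih =>
      intro s hreach hcard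
      by_cases hnorm : ∃ b : T.Black, s.IsCW b
      · obtain ⟨b, hb⟩ := hnorm
        obtain ⟨x, hx⟩ := hb.move_exists
        have hsub : {u | ∃ l, T.CWWalk x l u} ⊆ {u | ∃ l, T.CWWalk s l u} := by
          rintro u ⟨l, hl⟩
          exact ⟨b :: l, cwwalk_cons' hx hl⟩
        have hs_not : s ∉ {u | ∃ l, T.CWWalk x l u} := by
          rintro ⟨l, hl⟩
          exact hacyc s hreach ⟨b :: l, by simp, cwwalk_cons' hx hl⟩
        have hs_in : s ∈ {u | ∃ l, T.CWWalk s l u} := ⟨[], cwwalk_nil' s⟩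
        have hlt : Set.ncard {u | ∃ l, T.CWWalk x l u} < n := by
          rw [← hcard]
          exact Set.ncard_lt_ncard ⟨hsub, fun habs => hs_not (habs hs_in)⟩ (Set.toFinite _)
        have hax : T.Reaches a x := by
          obtain ⟨L, hL⟩ := hreach
          exact ⟨L ++ [(b, true)], Walk.append hL (Trinity.Walk.cw hx (Trinity.Walk.nil x))⟩
        obtain ⟨l, z, hz, hnz⟩ := ih _ hlt x hax rfl
        exact ⟨b :: l, z, cwwalk_cons' hx hz, hnz⟩
      · push_neg at hnorm
        exact ⟨[], s, cwwalk_nil' s, hnorm⟩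
  exact fun s h => key _ s h rfl

theorem counts_to_normal {a z : T.State} {l1 l2 : List T.Black}
    (hz : ∀ b, ¬ z.IsCW b) (h1 : T.CWWalk a l1 z) (h2 : T.CWWalk a l2 z) :
    ∀ c, l1.count c = l2.count c := by
  obtain ⟨u, lu, lv, hu, hv, cu, cv⟩ := residual l1 h1 h2
  have hlu := normal_no_walk hz hu
  have hlv := normal_no_walk hz hv
  subst hlu hlv
  intro c
  have e1 := cu c
  have e2 := cv c
  simp only [List.count_nil] at e1 e2
  omega

/-- Every state in the component of the minimal state `a` is forward-reachable from `a`. -/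
theorem reach_forward {a : T.State} (hmin : ¬ ∃ (u : T.State) (b : T.Black), T.CWMoveAt u a b) :
    ∀ {s u : T.State} {L : List (T.Black × Bool)}, T.Walk s L u →
      (∃ l, T.CWWalk a l s) → ∃ l, T.CWWalk a l u := by
  intro s u L hw
  induction hw with
  | nil => exact id
  | cw hm _ ih =>
    rintro ⟨l, hl⟩
    exact ih ⟨l ++ [_], cwwalk_append hl (cwwalk_cons' hm (cwwalk_nil' _))⟩
  | ccw hm _ ih =>
    rintro ⟨l, hl⟩
    rcases stripB l hl hm with ⟨_, l', hl', _⟩ | ⟨_, a', ha', _⟩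
    · exact ih ⟨l', hl'⟩
    · exact absurd ⟨a', _, ha'⟩ hmin

/-- A clockwise walk, reversed, is a walk. -/
theorem cwwalk_reverse_walk : ∀ (q : List T.Black) {x y : T.State},
    T.CWWalk x q y → ∃ L, T.Walk y L x := by
  intro q
  induction q with
  | nil =>
    intro x y h
    have := cwwalk_nil h
    subst this
    exact ⟨[], Trinity.Walk.nil _⟩
  | cons b q₁ ih =>
    intro x y h
    obtain ⟨x₁, hm, hw⟩ := cwwalk_cons h
    obtain ⟨L, hL⟩ := ih hw
    exact ⟨L ++ [(b, false)], Walk.append hL (Trinity.Walk.ccw hm (Trinity.Walk.nil x))⟩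

end Global

end Trinity
/-- Proposition 3.5.  Let `a` be the minimal state of an
acyclic component of the state transition graph of a planar or toric trinity
(the state of the component admitting no counter-clockwise moves); the function
`φ_s` of a state `s` of the component records how many times each black
triangle is changed along any path of clockwise moves from `a` to `s`.  Then
the image of `s ↦ φ_s` is closed under pointwise minima and maxima: for states
`s`, `t` of the component there are states of the component whose functions are
`min {φ_s, φ_t}` and `max {φ_s, φ_t}`. -/
theorem multiplicity_functions_closed_under_min_and_max
    (T : Trinity) (hpt : T.Planar ∨ T.Toric) (a : T.State) (hacyc : T.InAcyclic a)
    (hmin : ¬ ∃ (u : T.State) (b : T.Black), T.CWMoveAt u a b)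
    (s t : T.State) (ls lt : List T.Black)
    (hs : T.CWWalk a ls s) (ht : T.CWWalk a lt t) :
    (∃ (m : T.State) (lm : List T.Black), T.CWWalk a lm m ∧
      ∀ b : T.Black, lm.count b = min (ls.count b) (lt.count b)) ∧
    (∃ (j : T.State) (lj : List T.Black), T.CWWalk a lj j ∧
      ∀ b : T.Black, lj.count b = max (ls.count b) (lt.count b)) := by
  classical
  obtain ⟨u, lu, lv, hsu, htu, cu, cv⟩ := Trinity.residual ls hs ht
  have hmax : ∃ (j : T.State) (lj : List T.Black), T.CWWalk a lj j ∧
      ∀ b : T.Black, lj.count b = max (ls.count b) (lt.count b) := by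
    refine ⟨u, ls ++ lu, Trinity.cwwalk_append hs hsu, fun b => ?_⟩
    rw [List.count_append]
    have := cu b
    omega
  have hras : T.Reaches a s := ⟨_, hs⟩
  have hrat : T.Reaches a t := ⟨_, ht⟩
  obtain ⟨ps, z1, hps, hz1⟩ := Trinity.exists_normal hacyc s hras
  obtain ⟨pt, z2, hpt, hz2⟩ := Trinity.exists_normal hacyc t hrat
  obtain ⟨u2, lu2, lv2, h1, h2, _, _⟩ := Trinity.residual (ls ++ ps)
    (Trinity.cwwalk_append hs hps) (Trinity.cwwalk_append ht hpt)
  have e1 : lu2 = [] := Trinity.normal_no_walk hz1 h1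
  have e2 : lv2 = [] := Trinity.normal_no_walk hz2 h2
  subst e1 e2
  have hz12 : z2 = z1 := by
    have ha := Trinity.cwwalk_nil h1
    have hb := Trinity.cwwalk_nil h2
    rw [← hb]
    exact ha
  subst hz12
  obtain ⟨d, qs, qt, hdqs, hdqt, cqs, cqt⟩ := Trinity.coresidual ps hps hpt
  obtain ⟨Ld, hLd⟩ := Trinity.cwwalk_reverse_walk qs hdqs
  obtain ⟨ld, hld⟩ := Trinity.reach_forward hmin (Trinity.Walk.append hs hLd)
    ⟨[], Trinity.cwwalk_nil' a⟩
  have hW2 : T.CWWalk a ((ld ++ qs) ++ ps) z2 :=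
    Trinity.cwwalk_append (Trinity.cwwalk_append hld hdqs) hps
  have hcnt1 := Trinity.counts_to_normal hz1 (Trinity.cwwalk_append hs hps) hW2
  have hW3 : T.CWWalk a ((ld ++ qt) ++ pt) z2 :=
    Trinity.cwwalk_append (Trinity.cwwalk_append hld hdqt) hpt
  have hcnt2 := Trinity.counts_to_normal hz1 (Trinity.cwwalk_append ht hpt) hW3
  refine ⟨⟨d, ld, hld, fun b => ?_⟩, hmax⟩
  have i1 := hcnt1 b
  have i2 := hcnt2 b
  have i3 := cqs b
  have i4 := cqt b
  simp only [List.count_append] at i1 i2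
  omega
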